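/- If α ≠ 0 (with 0 ≤ Re(α_ℓ) < 1 for all ℓ), then V_n^α(m,∅) = L_n^α(m,0) is a nonzero simple U(gl(n))-module for every m ∈ Z. -/

import Mathlib

open Finsupp

/-- The space of Laurent polynomials `L_n = ℂ[x₁^{±1},...,xₙ^{±1}]`,
realized as finitely supported functions from exponent vectors to ℂ.
The monomial `x^k` is `Finsupp.single k 1`. -/
abbrev Lmon (n : ℕ) : Type := (Fin n → ℤ) →₀ ℂ

/-- The α-twisted action of the matrix unit `E_{ab}` on `L_n`:
`E_{ab} · x^k = (k_b + α_b) x^{k + e_a - e_b}`. -/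
noncomputable def Eab {n : ℕ} (α : Fin n → ℂ) (a b : Fin n) :
    Lmon n →ₗ[ℂ] Lmon n :=
  Finsupp.lsum ℂ (fun k => ((k b : ℂ) + α b) •
    Finsupp.lsingle (fun i => k i + (if i = a then 1 else 0) - (if i = b then 1 else 0)))

open scoped Classical in
/-- `V_n^α(m, J)`: the span of monomials `x^k` of total degree `m` such that
`{ℓ ∈ I_α : k_ℓ < 0} ⊆ J`, where `I_α = {ℓ : α_ℓ = 0}`. -/
noncomputable def Vmod {n : ℕ} (α : Fin n → ℂ) (m : ℤ) (J : Finset (Fin n)) :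
    Submodule ℂ (Lmon n) :=
  Submodule.span ℂ {f | ∃ k : Fin n → ℤ, f = Finsupp.single k (1 : ℂ) ∧
    (∑ i, k i) = m ∧ ∀ ℓ, α ℓ = 0 → k ℓ < 0 → ℓ ∈ J}

open scoped Classical in
/-- `L_n^α(m, j)`: the span of monomials `x^k` of total degree `m` with
`|{ℓ ∈ I_α : k_ℓ < 0}| ≤ j`  (the index `j` is an integer so that `j = -1`
gives the zero module). -/
noncomputable def LmodJ {n : ℕ} (α : Fin n → ℂ) (m j : ℤ) : Submodule ℂ (Lmon n) :=
  Submodule.span ℂ {f | ∃ k : Fin n → ℤ, f = Finsupp.single k (1 : ℂ) ∧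
    (∑ i, k i) = m ∧
    ((Finset.univ.filter (fun ℓ => α ℓ = 0 ∧ k ℓ < 0)).card : ℤ) ≤ j}

/-- A subspace of `L_n` is a `𝔤𝔩(n)`-submodule (equivalently a `U(𝔤𝔩(n))`-submodule)
iff it is invariant under all the operators `E_{ab}`. -/
def glInv {n : ℕ} (α : Fin n → ℂ) (p : Submodule ℂ (Lmon n)) : Prop :=
  ∀ a b : Fin n, ∀ f ∈ p, Eab α a b f ∈ p

/-- The `U(𝔤𝔩(n))`-submodule of `L_n^α` generated by `f`: the smallest subspace
containing `f` that is invariant under all `E_{ab}`. -/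
noncomputable def genMod {n : ℕ} (α : Fin n → ℂ) (f : Lmon n) : Submodule ℂ (Lmon n) :=
  sInf {p | f ∈ p ∧ glInv α p}

/-! ### Auxiliary definitions and lemmas -/

def shiftE {n : ℕ} (k : Fin n → ℤ) (a b : Fin n) : Fin n → ℤ :=
  fun i => k i + (if i = a then 1 else 0) - (if i = b then 1 else 0)

lemma Eab_single {n : ℕ} (α : Fin n → ℂ) (a b : Fin n) (k : Fin n → ℤ) (c : ℂ) :
    Eab α a b (Finsupp.single k c) = ((k b : ℂ) + α b) • Finsupp.single (shiftE k a b) c := by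
  unfold Eab shiftE
  rw [Finsupp.lsum_single]
  simp

lemma shiftE_shiftE {n : ℕ} (k : Fin n → ℤ) (a b : Fin n) :
    shiftE (shiftE k a b) b a = k := by
  funext i; unfold shiftE; split_ifs <;> ring

lemma sum_shiftE {n : ℕ} (k : Fin n → ℤ) (a b : Fin n) :
    (∑ i, shiftE k a b i) = ∑ i, k i := by
  unfold shiftE
  simp [Finset.sum_add_distrib, Finset.sum_sub_distrib, Finset.sum_ite_eq']

lemma diag_apply {n : ℕ} (α : Fin n → ℂ) (ℓ : Fin n) (f : Lmon n) (k' : Fin n → ℤ) :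
    (Eab α ℓ ℓ f) k' = ((k' ℓ : ℂ) + α ℓ) * f k' := by
  induction f using Finsupp.induction_linear with
  | zero => simp
  | add f g hf hg => simp [hf, hg, mul_add]
  | single k c =>
    rw [Eab_single]
    have h : shiftE k ℓ ℓ = k := by funext i; unfold shiftE; split_ifs <;> ring
    rw [h]
    simp only [Finsupp.smul_apply, Finsupp.single_apply]
    by_cases h2 : k = k' <;> simp [h2]

lemma extract {n : ℕ} (α : Fin n → ℂ) (p : Submodule ℂ (Lmon n)) (hp : glInv α p) :
    ∀ N : ℕ, ∀ f ∈ p, f.support.card ≤ N → ∀ k ∈ f.support, Finsupp.single k (1:ℂ) ∈ p := by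
  intro N
  induction N with
  | zero =>
    intro f _ hc k hk
    rw [Nat.le_zero, Finset.card_eq_zero] at hc
    simp [hc] at hk
  | succ N ih =>
    intro f hf hc k hk
    by_cases hone : f.support ⊆ {k}
    · have hfk : f = Finsupp.single k (f k) := (Finsupp.support_subset_singleton).mp hone
      have hne : f k ≠ 0 := Finsupp.mem_support_iff.mp hk
      have : Finsupp.single k (1:ℂ) = (f k)⁻¹ • f := by
        conv_rhs => rw [hfk, Finsupp.smul_single]
        simp [Finsupp.single_eq_same, inv_mul_cancel₀ hne]
      rw [this]
      exact Submodule.smul_mem p _ hf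
    · obtain ⟨k₂, hk₂, hk₂ne⟩ : ∃ k₂ ∈ f.support, k₂ ≠ k := by
        by_contra h
        push_neg at h
        exact hone fun x hx => Finset.mem_singleton.mpr (h x hx)
      obtain ⟨ℓ, hℓ⟩ : ∃ ℓ, k₂ ℓ ≠ k ℓ := by
        by_contra h; push_neg at h; exact hk₂ne (funext h)
      set g : Lmon n := Eab α ℓ ℓ f - ((k₂ ℓ : ℂ) + α ℓ) • f with hg
      have hgp : g ∈ p := Submodule.sub_mem p (hp ℓ ℓ f hf) (Submodule.smul_mem p _ hf)
      have hgapp : ∀ k', g k' = ((k' ℓ : ℂ) - (k₂ ℓ : ℂ)) * f k' := by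
        intro k'
        rw [hg]
        simp only [Finsupp.sub_apply, Finsupp.smul_apply, diag_apply, smul_eq_mul]
        ring
      have hsub : g.support ⊆ f.support.erase k₂ := by
        intro x hx
        rw [Finsupp.mem_support_iff, hgapp] at hx
        rw [Finset.mem_erase, Finsupp.mem_support_iff]
        constructor
        · rintro rfl; simp at hx
        · intro h0; rw [h0, mul_zero] at hx; exact hx rfl
      have hcard : g.support.card ≤ N := by
        have := Finset.card_le_card hsub
        have h2 : (f.support.erase k₂).card < f.support.card := Finset.card_erase_lt_of_mem hk₂
        omega
      apply ih g hgp hcard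
      rw [Finsupp.mem_support_iff, hgapp]
      apply mul_ne_zero
      · simp only [ne_eq, sub_eq_zero]
        exact_mod_cast fun h => hℓ (by exact_mod_cast h.symm)
      · exact Finsupp.mem_support_iff.mp hk

/-- the key arithmetic fact -/
lemma coeff_zero {n : ℕ} {α : Fin n → ℂ} (hα : ∀ ℓ, 0 ≤ (α ℓ).re ∧ (α ℓ).re < 1)
    (b : Fin n) (z : ℤ) (h : (z : ℂ) + α b = 0) : α b = 0 ∧ z = 0 := by
  have hre : (z : ℝ) + (α b).re = 0 := by
    have := congrArg Complex.re h
    simpa using this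
  have h1 := (hα b).1
  have h2 := (hα b).2
  have hz : z = 0 := by
    have : (0:ℝ) ≤ -(z:ℝ) ∧ -(z:ℝ) < 1 := by constructor <;> nlinarith
    exact_mod_cast by
      have hz1 : (z:ℝ) ≤ 0 := by linarith [this.1]
      have hz2 : (-1:ℝ) < z := by linarith [this.2]
      have : (-1:ℤ) < z := by exact_mod_cast hz2
      have : z ≤ 0 := by exact_mod_cast hz1
      omega
  subst hz
  simp at h
  exact ⟨h, rfl⟩

/-- one step: apply E_{ab} to a monomial in p -/
lemma step {n : ℕ} {α : Fin n → ℂ} {p : Submodule ℂ (Lmon n)} (hp : glInv α p)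
    {k : Fin n → ℤ} (hk : Finsupp.single k (1:ℂ) ∈ p) (a b : Fin n)
    (hc : ((k b : ℂ) + α b) ≠ 0) : Finsupp.single (shiftE k a b) (1:ℂ) ∈ p := by
  have h := hp a b _ hk
  rw [Eab_single] at h
  have := Submodule.smul_mem p ((k b : ℂ) + α b)⁻¹ h
  rwa [smul_smul, inv_mul_cancel₀ hc, one_smul] at this

section conn
variable {n : ℕ} {α : Fin n → ℂ} (hα : ∀ ℓ, 0 ≤ (α ℓ).re ∧ (α ℓ).re < 1)
  {a₀ : Fin n} (ha₀ : α a₀ ≠ 0) {p : Submodule ℂ (Lmon n)} (hp : glInv α p) (m : ℤ)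

def Allowed {n : ℕ} (α : Fin n → ℂ) (m : ℤ) (k : Fin n → ℤ) : Prop :=
  (∑ i, k i) = m ∧ ∀ ℓ, α ℓ = 0 → 0 ≤ k ℓ

def canK {n : ℕ} (a₀ : Fin n) (m : ℤ) : Fin n → ℤ := fun i => if i = a₀ then m else 0

noncomputable def mu {n : ℕ} (a₀ : Fin n) (k : Fin n → ℤ) : ℕ :=
  ∑ c ∈ Finset.univ.erase a₀, (k c).natAbs

lemma mu_lt {n : ℕ} (a₀ : Fin n) (k k' : Fin n → ℤ) (b : Fin n) (hb : b ≠ a₀)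
    (heq : ∀ c, c ≠ a₀ → c ≠ b → k' c = k c) (hlt : (k' b).natAbs < (k b).natAbs) :
    mu a₀ k' < mu a₀ k := by
  unfold mu
  have hbmem : b ∈ Finset.univ.erase a₀ := Finset.mem_erase.mpr ⟨hb, Finset.mem_univ b⟩
  apply Finset.sum_lt_sum
  · intro c hc
    by_cases hcb : c = b
    · subst hcb; omega
    · rw [heq c (Finset.mem_erase.mp hc).1 hcb]
  · exact ⟨b, hbmem, hlt⟩

lemma mu_zero_canK {n : ℕ} (a₀ : Fin n) (m : ℤ) (k : Fin n → ℤ)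
    (hsum : (∑ i, k i) = m) (h : ∀ b, b ≠ a₀ → k b = 0) : k = canK a₀ m := by
  funext i
  unfold canK
  by_cases hi : i = a₀
  · subst hi
    have h2 : (∑ j, k j) = k i + ∑ c ∈ Finset.univ.erase i, k c :=
      (Finset.add_sum_erase _ _ (Finset.mem_univ i)).symm
    rw [Finset.sum_eq_zero fun c hc => h c (Finset.mem_erase.mp hc).1] at h2
    rw [if_pos rfl, ← hsum, h2]; ring
  · simp [hi, h i hi]

include hα ha₀ hp in
lemma toCan : ∀ N : ℕ, ∀ k : Fin n → ℤ, Allowed α m k → mu a₀ k ≤ N →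
    Finsupp.single k (1:ℂ) ∈ p → Finsupp.single (canK a₀ m) (1:ℂ) ∈ p := by
  intro N
  induction N with
  | zero =>
    intro k hk hμ hkp
    have : ∀ b, b ≠ a₀ → k b = 0 := by
      intro b hb
      have : (k b).natAbs = 0 := by
        have : (k b).natAbs ≤ mu a₀ k := Finset.single_le_sum (f := fun c => (k c).natAbs)
          (fun c _ => Nat.zero_le _) (Finset.mem_erase.mpr ⟨hb, Finset.mem_univ b⟩)
        omega
      omega
    rwa [mu_zero_canK a₀ m k hk.1 this] at hkp
  | succ N ih =>
    intro k hk hμ hkp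
    by_cases hz : ∀ b, b ≠ a₀ → k b = 0
    · rwa [mu_zero_canK a₀ m k hk.1 hz] at hkp
    · push_neg at hz
      obtain ⟨b, hb, hkb⟩ := hz
      rcases lt_or_gt_of_ne hkb with hneg | hpos
      · -- k b < 0 : α b ≠ 0, move E_{b a₀}, k' = shiftE k b a₀
        have hαb : α b ≠ 0 := fun h0 => by have := hk.2 b h0; omega
        have hc : ((k a₀ : ℂ) + α a₀) ≠ 0 := fun h0 => ha₀ (coeff_zero hα a₀ (k a₀) h0).1
        have hstep := step hp hkp b a₀ hc
        set k' := shiftE k b a₀ with hk'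
        have hk'v : ∀ c, k' c = k c + (if c = b then 1 else 0) - (if c = a₀ then 1 else 0) :=
          fun c => rfl
        apply ih k'
        · constructor
          · rw [hk', sum_shiftE]; exact hk.1
          · intro ℓ hℓ
            have hℓb : ℓ ≠ b := fun h => hαb (h ▸ hℓ)
            have hℓa : ℓ ≠ a₀ := fun h => ha₀ (h ▸ hℓ)
            rw [hk'v, if_neg hℓb, if_neg hℓa]
            have := hk.2 ℓ hℓ; omega
        · have : mu a₀ k' < mu a₀ k := by
            apply mu_lt a₀ k k' b hb
            · intro c hca hcb; rw [hk'v, if_neg hcb, if_neg hca]; ring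
            · rw [hk'v, if_pos rfl, if_neg hb]; omega
          omega
        · exact hstep
      · -- k b > 0 : move E_{a₀ b}, k' = shiftE k a₀ b
        have hc : ((k b : ℂ) + α b) ≠ 0 := fun h0 => by
          have := (coeff_zero hα b (k b) h0).2; omega
        have hstep := step hp hkp a₀ b hc
        set k' := shiftE k a₀ b with hk'
        have hk'v : ∀ c, k' c = k c + (if c = a₀ then 1 else 0) - (if c = b then 1 else 0) :=
          fun c => rfl
        apply ih k'
        · constructor
          · rw [hk', sum_shiftE]; exact hk.1
          · intro ℓ hℓ
            have hℓa : ℓ ≠ a₀ := fun h => ha₀ (h ▸ hℓ)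
            rw [hk'v, if_neg hℓa]
            by_cases hℓb : ℓ = b
            · subst hℓb
              have := hk.2 ℓ hℓ
              rw [if_pos rfl]; omega
            · rw [if_neg hℓb]; have := hk.2 ℓ hℓ; omega
        · have : mu a₀ k' < mu a₀ k := by
            apply mu_lt a₀ k k' b hb
            · intro c hca hcb; rw [hk'v, if_neg hcb, if_neg hca]; ring
            · rw [hk'v, if_neg hb, if_pos rfl]; omega
          omega
        · exact hstep

include hα ha₀ hp in
lemma fromCan : ∀ N : ℕ, ∀ k : Fin n → ℤ, Allowed α m k → mu a₀ k ≤ N →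
    Finsupp.single (canK a₀ m) (1:ℂ) ∈ p → Finsupp.single k (1:ℂ) ∈ p := by
  intro N
  induction N with
  | zero =>
    intro k hk hμ hcp
    have : ∀ b, b ≠ a₀ → k b = 0 := by
      intro b hb
      have : (k b).natAbs ≤ mu a₀ k := Finset.single_le_sum (f := fun c => (k c).natAbs)
        (fun c _ => Nat.zero_le _) (Finset.mem_erase.mpr ⟨hb, Finset.mem_univ b⟩)
      omega
    rwa [mu_zero_canK a₀ m k hk.1 this]
  | succ N ih =>
    intro k hk hμ hcp
    by_cases hz : ∀ b, b ≠ a₀ → k b = 0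
    · rwa [mu_zero_canK a₀ m k hk.1 hz]
    · push_neg at hz
      obtain ⟨b, hb, hkb⟩ := hz
      rcases lt_or_gt_of_ne hkb with hneg | hpos
      · -- k b < 0 : α b ≠ 0; predecessor k'' = shiftE k b a₀ (so shiftE k'' a₀ b = k)
        have hαb : α b ≠ 0 := fun h0 => by have := hk.2 b h0; omega
        set k'' := shiftE k b a₀ with hk''
        have hk''v : ∀ c, k'' c = k c + (if c = b then 1 else 0) - (if c = a₀ then 1 else 0) :=
          fun c => rfl
        have hAll : Allowed α m k'' := by
          constructor
          · rw [hk'', sum_shiftE]; exact hk.1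
          · intro ℓ hℓ
            have hℓb : ℓ ≠ b := fun h => hαb (h ▸ hℓ)
            have hℓa : ℓ ≠ a₀ := fun h => ha₀ (h ▸ hℓ)
            rw [hk''v, if_neg hℓb, if_neg hℓa]
            have := hk.2 ℓ hℓ; omega
        have hmu : mu a₀ k'' < mu a₀ k := by
          apply mu_lt a₀ k k'' b hb
          · intro c hca hcb; rw [hk''v, if_neg hcb, if_neg hca]; ring
          · rw [hk''v, if_pos rfl, if_neg hb]; omega
        have hk''p := ih k'' hAll (by omega) hcp
        have hc : ((k'' b : ℂ) + α b) ≠ 0 := by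
          intro h0
          exact hαb (coeff_zero hα b (k'' b) h0).1
        have := step hp hk''p a₀ b hc
        rwa [hk'', shiftE_shiftE] at this
      · -- k b > 0 : predecessor k'' = shiftE k a₀ b, apply E_{b a₀}
        set k'' := shiftE k a₀ b with hk''
        have hk''v : ∀ c, k'' c = k c + (if c = a₀ then 1 else 0) - (if c = b then 1 else 0) :=
          fun c => rfl
        have hAll : Allowed α m k'' := by
          constructor
          · rw [hk'', sum_shiftE]; exact hk.1
          · intro ℓ hℓ
            have hℓa : ℓ ≠ a₀ := fun h => ha₀ (h ▸ hℓ)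
            rw [hk''v, if_neg hℓa]
            by_cases hℓb : ℓ = b
            · subst hℓb; rw [if_pos rfl]; have := hk.2 ℓ hℓ; omega
            · rw [if_neg hℓb]; have := hk.2 ℓ hℓ; omega
        have hmu : mu a₀ k'' < mu a₀ k := by
          apply mu_lt a₀ k k'' b hb
          · intro c hca hcb; rw [hk''v, if_neg hcb, if_neg hca]; ring
          · rw [hk''v, if_neg hb, if_pos rfl]; omega
        have hk''p := ih k'' hAll (by omega) hcp
        have hc : ((k'' a₀ : ℂ) + α a₀) ≠ 0 := fun h0 => ha₀ (coeff_zero hα a₀ (k'' a₀) h0).1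
        have := step hp hk''p b a₀ hc
        rwa [hk'', shiftE_shiftE] at this

end conn

/-- elements of `Vmod α m ∅` are supported on allowed exponents -/
lemma Vmod_support {n : ℕ} (α : Fin n → ℂ) (m : ℤ) :
    Vmod α m ∅ ≤ Finsupp.supported ℂ ℂ {k : Fin n → ℤ | Allowed α m k} := by
  rw [Vmod, Submodule.span_le]
  rintro f ⟨k, rfl, hsum, hneg⟩
  rw [SetLike.mem_coe, Finsupp.mem_supported]
  refine Set.Subset.trans (Finset.coe_subset.mpr Finsupp.support_single_subset) ?_
  intro x hx
  rw [Finset.coe_singleton, Set.mem_singleton_iff] at hx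
  subst hx
  refine ⟨hsum, fun ℓ hℓ => ?_⟩
  by_contra h
  exact absurd (hneg ℓ hℓ (by omega)) (by simp)

/-- the allowed monomials are in `Vmod α m ∅` -/
lemma mem_Vmod {n : ℕ} (α : Fin n → ℂ) (m : ℤ) (k : Fin n → ℤ) (hk : Allowed α m k) :
    Finsupp.single k (1:ℂ) ∈ Vmod α m ∅ := by
  apply Submodule.subset_span
  exact ⟨k, rfl, hk.1, fun ℓ hℓ hlt => absurd (hk.2 ℓ hℓ) (by omega)⟩

/-- For `α ≠ 0`, `V_n^α(m,∅) = L_n^α(m,0)` is a nonzero simple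
`U(𝔤𝔩(n))`-module for every `m ∈ ℤ`. -/
theorem stmt_14 (n : ℕ) (α : Fin n → ℂ)
    (hα : ∀ ℓ, 0 ≤ (α ℓ).re ∧ (α ℓ).re < 1) (hα0 : α ≠ 0) (m : ℤ) :
    Vmod α m ∅ = LmodJ α m 0 ∧
    Vmod α m ∅ ≠ ⊥ ∧
    ∀ p : Submodule ℂ (Lmon n), glInv α p → p ≤ Vmod α m ∅ → p ≠ ⊥ →
      p = Vmod α m ∅ := by
  obtain ⟨a₀, ha₀⟩ : ∃ a₀, α a₀ ≠ 0 := Function.ne_iff.mp hα0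
  have hcanAll : Allowed α m (canK a₀ m) := by
    constructor
    · unfold canK; simp [Finset.sum_ite_eq']
    · intro ℓ hℓ
      have : ℓ ≠ a₀ := fun h => ha₀ (h ▸ hℓ)
      unfold canK; rw [if_neg this]
  refine ⟨?_, ?_, ?_⟩
  · -- Vmod = LmodJ
    unfold Vmod LmodJ
    congr 1
    ext f
    constructor
    · rintro ⟨k, rfl, hsum, hneg⟩
      refine ⟨k, rfl, hsum, ?_⟩
      have : (Finset.univ.filter (fun ℓ => α ℓ = 0 ∧ k ℓ < 0)) = ∅ := by
        rw [Finset.filter_eq_empty_iff]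
        rintro ℓ _ ⟨h1, h2⟩
        exact absurd (hneg ℓ h1 h2) (by simp)
      rw [this]; simp
    · rintro ⟨k, rfl, hsum, hcard⟩
      refine ⟨k, rfl, hsum, fun ℓ h1 h2 => ?_⟩
      exfalso
      have hmem : ℓ ∈ Finset.univ.filter (fun ℓ => α ℓ = 0 ∧ k ℓ < 0) := by
        simp [h1, h2]
      have : 0 < (Finset.univ.filter (fun ℓ => α ℓ = 0 ∧ k ℓ < 0)).card :=
        Finset.card_pos.mpr ⟨ℓ, hmem⟩
      omega
  · -- nonzero
    intro hbot
    have h1 : Finsupp.single (canK a₀ m) (1:ℂ) ∈ Vmod α m ∅ := mem_Vmod α m _ hcanAll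
    rw [hbot, Submodule.mem_bot] at h1
    exact one_ne_zero (Finsupp.single_eq_zero.mp h1)
  · -- simple
    intro p hp hple hpbot
    obtain ⟨f, hf, hfne⟩ := Submodule.exists_mem_ne_zero_of_ne_bot hpbot
    obtain ⟨k, hk⟩ : ∃ k, k ∈ f.support := by
      by_contra h
      push_neg at h
      exact hfne (Finsupp.support_eq_empty.mp (Finset.eq_empty_of_forall_notMem h))
    have hkAll : Allowed α m k := by
      have := Vmod_support α m (hple hf)
      rw [Finsupp.mem_supported] at this
      exact this hk
    have hkp : Finsupp.single k (1:ℂ) ∈ p :=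
      extract α p hp f.support.card f hf le_rfl k hk
    have hcanp : Finsupp.single (canK a₀ m) (1:ℂ) ∈ p :=
      toCan hα ha₀ hp m (mu a₀ k) k hkAll le_rfl hkp
    apply le_antisymm hple
    rw [Vmod, Submodule.span_le]
    rintro g ⟨k', rfl, hsum, hneg⟩
    have hk'All : Allowed α m k' := ⟨hsum, fun ℓ hℓ => by
      by_contra h
      exact absurd (hneg ℓ hℓ (by omega)) (by simp)⟩
    exact fromCan hα ha₀ hp m (mu a₀ k') k' hk'All le_rfl hcanp
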